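/- Let n ≥ 3 be an even natural number and let ζ = exp(2πi/3) ∈ ℂ. The set of triples (x,y,z) of nonzero complex numbers satisfying the leading term equations y² = 1, x²·yⁿ = z, and z² = x·y is exactly the six-element set {(1,1,1), (ζ,1,ζ²), (ζ²,1,ζ), (−1,−1,1), (−ζ²,−1,ζ), (−ζ,−1,ζ²)}. -/
import Mathlib


open Complex

/-- solutions of the leading term equations for even `n ≥ 3`. -/
theorem stmt_9 (n : ℕ) (hn : 3 ≤ n) (heven : Even n) :
    let ζ : ℂ := Complex.exp (2 * Real.pi * Complex.I / 3)
    {p : ℂ × ℂ × ℂ | p.1 ≠ 0 ∧ p.2.1 ≠ 0 ∧ p.2.2 ≠ 0 ∧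
        p.2.1 ^ 2 = 1 ∧ p.1 ^ 2 * p.2.1 ^ n = p.2.2 ∧ p.2.2 ^ 2 = p.1 * p.2.1} =
      {(1, 1, 1), (ζ, 1, ζ ^ 2), (ζ ^ 2, 1, ζ),
        (-1, -1, 1), (-ζ ^ 2, -1, ζ), (-ζ, -1, ζ ^ 2)} := by
  intro ζ
  have hζ0 : ζ ≠ 0 := Complex.exp_ne_zero _
  have hζ3 : ζ ^ 3 = 1 := by
    show Complex.exp (2 * Real.pi * Complex.I / 3) ^ 3 = 1
    rw [← Complex.exp_nat_mul]
    rw [show ((3:ℕ):ℂ) * (2 * Real.pi * Complex.I / 3) = 2 * Real.pi * Complex.I by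
      push_cast; ring, Complex.exp_two_pi_mul_I]
  have hprim : IsPrimitiveRoot ζ 3 := Complex.isPrimitiveRoot_exp 3 (by norm_num)
  have hζ1 : ζ ≠ 1 := hprim.ne_one (by norm_num)
  have hsum : ζ ^ 2 + ζ + 1 = 0 := by
    have h : (ζ - 1) * (ζ ^ 2 + ζ + 1) = 0 := by linear_combination hζ3
    rcases mul_eq_zero.1 h with h | h
    · exact absurd (sub_eq_zero.1 h) hζ1
    · exact h
  have cube : ∀ x : ℂ, x ^ 3 = 1 → x = 1 ∨ x = ζ ∨ x = ζ ^ 2 := by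
    intro x hx
    have h : (x - 1) * (x - ζ) * (x - ζ ^ 2) = 0 := by
      linear_combination hx + (x - x ^ 2) * hsum + (x - 1) * hζ3
    rcases mul_eq_zero.1 h with h | h
    · rcases mul_eq_zero.1 h with h | h
      · exact Or.inl (sub_eq_zero.1 h)
      · exact Or.inr (Or.inl (sub_eq_zero.1 h))
    · exact Or.inr (Or.inr (sub_eq_zero.1 h))
  ext ⟨x, y, z⟩
  simp only [Set.mem_setOf_eq, Set.mem_insert_iff, Set.mem_singleton_iff, Prod.mk.injEq]
  constructor
  · rintro ⟨hx, hy, hz, h1, h2, h3⟩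
    have hy' : y = 1 ∨ y = -1 := by
      have : (y - 1) * (y + 1) = 0 := by linear_combination h1
      rcases mul_eq_zero.1 this with h | h
      · exact Or.inl (sub_eq_zero.1 h)
      · exact Or.inr (eq_neg_of_add_eq_zero_left h)
    rcases hy' with rfl | rfl
    · have hzz : z = x ^ 2 := by rw [← h2, one_pow, mul_one]
      have hx3 : x ^ 3 = 1 := by
        have h4 : x * x ^ 3 = x * 1 := by
          rw [mul_one]; linear_combination h3 - (x ^ 2 + z) * hzz
        exact mul_left_cancel₀ hx h4
      rcases cube x hx3 with rfl | rfl | rfl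
      · exact Or.inl ⟨rfl, rfl, by simpa using hzz⟩
      · exact Or.inr (Or.inl ⟨rfl, rfl, hzz⟩)
      · exact Or.inr (Or.inr (Or.inl ⟨rfl, rfl, by rw [hzz]; linear_combination ζ * hζ3⟩))
    · have hyn : (-1 : ℂ) ^ n = 1 := heven.neg_one_pow
      have hzz : z = x ^ 2 := by rw [← h2, hyn, mul_one]
      have hx3 : x ^ 3 = -1 := by
        have h4 : x * x ^ 3 = x * (-1) := by
          linear_combination h3 - (x ^ 2 + z) * hzz
        exact mul_left_cancel₀ hx h4
      have hx3' : (-x) ^ 3 = 1 := by linear_combination -hx3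
      rcases cube (-x) hx3' with h | h | h
      · have : x = -1 := by linear_combination -h
        subst this
        exact Or.inr (Or.inr (Or.inr (Or.inl ⟨rfl, rfl, by rw [hzz]; ring⟩)))
      · have : x = -ζ := by linear_combination -h
        subst this
        refine Or.inr (Or.inr (Or.inr (Or.inr (Or.inr ⟨rfl, rfl, ?_⟩))))
        rw [hzz]; ring
      · have : x = -ζ ^ 2 := by linear_combination -h
        subst this
        refine Or.inr (Or.inr (Or.inr (Or.inr (Or.inl ⟨rfl, rfl, ?_⟩))))
        rw [hzz]; linear_combination ζ * hζ3
  · have hyn : (-1 : ℂ) ^ n = 1 := heven.neg_one_pow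
    rintro (⟨rfl, rfl, rfl⟩ | ⟨rfl, rfl, rfl⟩ | ⟨rfl, rfl, rfl⟩ | ⟨rfl, rfl, rfl⟩ |
      ⟨rfl, rfl, rfl⟩ | ⟨rfl, rfl, rfl⟩)
    · exact ⟨one_ne_zero, one_ne_zero, one_ne_zero, by norm_num, by norm_num, by norm_num⟩
    · exact ⟨hζ0, one_ne_zero, pow_ne_zero _ hζ0, by norm_num, by rw [one_pow, mul_one],
        by linear_combination ζ * hζ3⟩
    · exact ⟨pow_ne_zero _ hζ0, one_ne_zero, hζ0, by norm_num,
        by rw [one_pow, mul_one]; linear_combination ζ * hζ3, by ring⟩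
    · refine ⟨by norm_num, by norm_num, one_ne_zero, by norm_num, ?_, by norm_num⟩
      rw [hyn, mul_one]; ring
    · refine ⟨by simpa using pow_ne_zero 2 hζ0, by norm_num, hζ0, by norm_num, ?_, ?_⟩
      · rw [hyn, mul_one]; linear_combination ζ * hζ3
      · ring
    · refine ⟨by simpa using hζ0, by norm_num, pow_ne_zero _ hζ0, by norm_num, ?_, ?_⟩
      · rw [hyn, mul_one]; ring
      · linear_combination ζ * hζ3
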